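/- Let $C_4>0$, $\tilde{\nu}>1$, and suppose a measurable function $u$ on a finite measure space $(\Omega,\mu)$ satisfies $\|u\|_{L^p(\Omega)}\le C_4\,p^{1-1/\tilde{\nu}}\,\mu(\Omega)^{1/p}$ for every $p>1$. Then for every $\sigma$ with $0<\sigma<\frac{\tilde{\nu}-1}{e\tilde{\nu}}C_4^{-\tilde{\nu}/(\tilde{\nu}-1)}$, one has $\int_{\Omega}\left(e^{\sigma|u|^{\tilde{\nu}/(\tilde{\nu}-1)}}-1\right)d\mu\le \mu(\Omega)\sum_{j=1}^{\infty}\frac{\sigma^j}{j!}C_4^{\frac{j\tilde{\nu}}{\tilde{\nu}-1}}\left(\frac{j\tilde{\nu}}{\tilde{\nu}-1}\right)^{j}<\infty$. -/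

import Mathlib

open MeasureTheory
open scoped ENNReal NNReal

lemma aux_pow_le_exp_mul_factorial (n : ℕ) : (n:ℝ)^n ≤ Real.exp n * (Nat.factorial n) := by
  have hs := Real.summable_pow_div_factorial (n:ℝ)
  have h1 : (n:ℝ)^n / (Nat.factorial n) ≤ ∑' k, (n:ℝ)^k / (Nat.factorial k) :=
    hs.le_tsum n (fun k _ => by positivity)
  have hexp : Real.exp (n:ℝ) = ∑' k:ℕ, (n:ℝ)^k/((Nat.factorial k)) := by
    rw [Real.exp_eq_exp_ℝ, NormedSpace.exp_eq_tsum_div]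
  rw [← hexp] at h1
  have hf : (0:ℝ) < ((Nat.factorial n) : ℝ) := by positivity
  calc (n:ℝ)^n = ((n:ℝ)^n / (Nat.factorial n)) * (Nat.factorial n) := by field_simp
    _ ≤ Real.exp n * (Nat.factorial n) := by
        apply mul_le_mul_of_nonneg_right h1 hf.le

lemma aux_exp_sub_one (x : ℝ) :
    Real.exp x - 1 = ∑' j : ℕ, x^(j+1)/((Nat.factorial (j+1)) : ℝ) := by
  have hs := Real.summable_pow_div_factorial x
  have hexp : Real.exp x = ∑' k:ℕ, x^k/((Nat.factorial k)) := by
    rw [Real.exp_eq_exp_ℝ, NormedSpace.exp_eq_tsum_div]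
  rw [hexp, hs.tsum_eq_zero_add]
  norm_num

lemma aux_summable_shift (x : ℝ) : Summable (fun j : ℕ => x^(j+1)/((Nat.factorial (j+1)) : ℝ)) := by
  exact (Real.summable_pow_div_factorial x).comp_injective (add_left_injective 1)

lemma aux_moment {Ω : Type*} [MeasurableSpace Ω] (μ : Measure Ω) [IsFiniteMeasure μ]
    (u : Ω → ℝ) (B p : ℝ) (hB : 0 ≤ B) (hp : 0 < p)
    (h : eLpNorm u (ENNReal.ofReal p) μ ≤
      ENNReal.ofReal (B * ((μ Set.univ).toReal) ^ (1/p))) :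
    ∫⁻ x, (ENNReal.ofReal |u x|) ^ p ∂μ ≤ ENNReal.ofReal (B ^ p) * μ Set.univ := by
  have hne0 : ENNReal.ofReal p ≠ 0 := by
    simp only [ne_eq, ENNReal.ofReal_eq_zero, not_le]; exact hp
  rw [eLpNorm_eq_lintegral_rpow_enorm_toReal hne0 ENNReal.ofReal_ne_top,
    ENNReal.toReal_ofReal hp.le] at h
  have h2 := ENNReal.rpow_le_rpow h hp.le
  rw [← ENNReal.rpow_mul, one_div_mul_cancel hp.ne', ENNReal.rpow_one] at h2
  have h3 : (∫⁻ x, ‖u x‖ₑ ^ p ∂μ) = ∫⁻ x, (ENNReal.ofReal |u x|) ^ p ∂μ := by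
    congr 1; ext x; rw [Real.enorm_eq_ofReal_abs]
  rw [h3] at h2
  refine h2.trans (le_of_eq ?_)
  have hB2 : (B * (μ Set.univ).toReal ^ (1/p))^p = B^p * (μ Set.univ).toReal := by
    rw [Real.mul_rpow hB (by positivity), ← Real.rpow_mul ENNReal.toReal_nonneg,
      one_div_mul_cancel hp.ne', Real.rpow_one]
  rw [ENNReal.ofReal_rpow_of_nonneg (by positivity) hp.le, hB2,
    ENNReal.ofReal_mul (by positivity), ENNReal.ofReal_toReal (measure_ne_top μ _)]

/-- Moser–Trudinger summation step: if `‖u‖_{L^p} ≤ C₄ p^{1-1/ν̃} μ(Ω)^{1/p}` for all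
`p > 1`, then for `0 < σ < (ν̃-1)/(e ν̃) · C₄^{-ν̃/(ν̃-1)}` the series bounding
`∫ (exp(σ|u|^{ν̃/(ν̃-1)}) - 1)` converges and the integral is bounded by
`μ(Ω)` times its sum. -/
theorem stmt11 {Ω : Type*} [MeasurableSpace Ω] (μ : Measure Ω) [IsFiniteMeasure μ]
    (C₄ ν : ℝ) (hC₄ : 0 < C₄) (hν : 1 < ν)
    (u : Ω → ℝ) (hu : Measurable u)
    (hbd : ∀ p : ℝ, 1 < p → eLpNorm u (ENNReal.ofReal p) μ ≤
      ENNReal.ofReal (C₄ * p ^ (1 - 1 / ν) * ((μ Set.univ).toReal) ^ (1 / p)))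
    (σ : ℝ) (hσ0 : 0 < σ)
    (hσ : σ < (ν - 1) / (Real.exp 1 * ν) * C₄ ^ (-(ν / (ν - 1)))) :
    Summable (fun j : ℕ => σ ^ (j + 1) / (Nat.factorial (j + 1)) *
        C₄ ^ (((j : ℝ) + 1) * ν / (ν - 1)) *
        (((j : ℝ) + 1) * ν / (ν - 1)) ^ ((j : ℝ) + 1)) ∧
      ∫⁻ x, ENNReal.ofReal (Real.exp (σ * |u x| ^ (ν / (ν - 1))) - 1) ∂μ ≤
        μ Set.univ * ENNReal.ofReal (∑' j : ℕ, σ ^ (j + 1) / (Nat.factorial (j + 1)) *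
          C₄ ^ (((j : ℝ) + 1) * ν / (ν - 1)) *
          (((j : ℝ) + 1) * ν / (ν - 1)) ^ ((j : ℝ) + 1)) := by
  set q : ℝ := ν / (ν - 1) with hqdef
  clear_value q
  have hν1 : (0:ℝ) < ν - 1 := by linarith
  have hν0 : (0:ℝ) < ν := by linarith
  have hq1 : 1 < q := by
    rw [hqdef, lt_div_iff₀ hν1]; linarith
  have hq0 : (0:ℝ) < q := by linarith
  set a : ℕ → ℝ := fun j => σ ^ (j + 1) / (Nat.factorial (j + 1)) *
        C₄ ^ (((j : ℝ) + 1) * ν / (ν - 1)) *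
        (((j : ℝ) + 1) * ν / (ν - 1)) ^ ((j : ℝ) + 1) with hadef
  clear_value a
  have hanonneg : ∀ j, 0 ≤ a j := by
    intro j
    have h1 : (0:ℝ) < ((j:ℝ) + 1) * ν / (ν - 1) := by positivity
    have h2 : (0:ℝ) < (Nat.factorial (j+1) : ℝ) := by positivity
    rw [hadef]
    positivity
  -- the geometric ratio
  set r : ℝ := σ * C₄ ^ q * q * Real.exp 1 with hrdef
  clear_value r
  have hr0 : 0 < r := by rw [hrdef]; positivity
  have hr1 : r < 1 := by
    have hCq : C₄ ^ (-q) = (C₄ ^ q)⁻¹ := Real.rpow_neg hC₄.le q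
    have hkey : (ν - 1) / (Real.exp 1 * ν) = (Real.exp 1 * q)⁻¹ := by
      rw [hqdef]; field_simp
    rw [hkey, hCq] at hσ
    have hpos : (0:ℝ) < C₄ ^ q * q * Real.exp 1 := by positivity
    have := mul_lt_mul_of_pos_right hσ hpos
    calc r = σ * (C₄ ^ q * q * Real.exp 1) := by rw [hrdef]; ring
      _ < (Real.exp 1 * q)⁻¹ * (C₄ ^ q)⁻¹ * (C₄ ^ q * q * Real.exp 1) := this
      _ = 1 := by
          field_simp
  -- term-by-term bound by geometric series
  have hkey : ∀ j : ℕ, a j ≤ r ^ (j + 1) := by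
    intro j
    have hcast : ((j:ℝ) + 1) = ((j + 1 : ℕ) : ℝ) := by push_cast; ring
    have hC : C₄ ^ (((j : ℝ) + 1) * ν / (ν - 1)) = (C₄ ^ q) ^ (j + 1) := by
      rw [show ((j : ℝ) + 1) * ν / (ν - 1) = q * ((j:ℝ) + 1) by rw [hqdef]; ring,
        Real.rpow_mul hC₄.le, hcast, Real.rpow_natCast]
    have hP : (((j : ℝ) + 1) * ν / (ν - 1)) ^ ((j : ℝ) + 1)
        = (((j:ℝ) + 1) * q) ^ (j + 1) := by
      nth_rewrite 2 [hcast]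
      rw [Real.rpow_natCast]
      congr 1
      rw [hqdef]; ring
    have hfac : ((j:ℝ) + 1) ^ (j + 1) ≤ Real.exp 1 ^ (j + 1) * Nat.factorial (j + 1) := by
      have := aux_pow_le_exp_mul_factorial (j + 1)
      rw [← Real.exp_one_pow] at this
      calc ((j:ℝ) + 1) ^ (j + 1) = ((j + 1 : ℕ) : ℝ) ^ (j + 1) := by rw [hcast]
        _ ≤ _ := by exact_mod_cast this
    have hfacpos : (0:ℝ) < (Nat.factorial (j + 1) : ℝ) := by positivity
    have haeq : a j = (σ * C₄ ^ q * q) ^ (j + 1)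
        * (((j:ℝ) + 1) ^ (j + 1) / (Nat.factorial (j + 1) : ℝ)) := by
      rw [hadef]; simp only []
      rw [hC, hP, mul_pow ((j:ℝ)+1) q, mul_pow (σ * C₄ ^ q) q, mul_pow σ (C₄ ^ q)]
      ring
    rw [haeq]
    have h2 : ((j:ℝ) + 1) ^ (j + 1) / (Nat.factorial (j + 1) : ℝ) ≤ Real.exp 1 ^ (j + 1) := by
      rw [div_le_iff₀ hfacpos]; exact hfac
    calc (σ * C₄ ^ q * q) ^ (j + 1) * (((j:ℝ) + 1) ^ (j + 1) / (Nat.factorial (j + 1) : ℝ))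
        ≤ (σ * C₄ ^ q * q) ^ (j + 1) * Real.exp 1 ^ (j + 1) := by
          apply mul_le_mul_of_nonneg_left h2 (by positivity)
      _ = r ^ (j + 1) := by rw [hrdef, ← mul_pow]
  have hsummable : Summable a := by
    apply Summable.of_nonneg_of_le hanonneg hkey
    have : Summable (fun j : ℕ => r ^ j) := summable_geometric_of_lt_one hr0.le hr1
    simpa [pow_succ, mul_comm] using this.mul_left r
  refine ⟨hsummable, ?_⟩
  -- pointwise expansion of the exponential
  have hterm : ∀ x : Ω, ∀ j : ℕ, (σ * |u x| ^ q) ^ (j+1) / (Nat.factorial (j+1) : ℝ)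
      = σ ^ (j+1) / (Nat.factorial (j+1) : ℝ) * |u x| ^ (q * ((j:ℝ)+1)) := by
    intro x j
    rw [mul_pow, Real.rpow_mul (abs_nonneg _),
      show ((j:ℝ)+1) = ((j+1:ℕ):ℝ) from by push_cast; ring, Real.rpow_natCast]
    ring
  have hpt : ∀ x : Ω, ENNReal.ofReal (Real.exp (σ * |u x| ^ q) - 1)
      = ∑' j : ℕ, ENNReal.ofReal (σ ^ (j+1) / (Nat.factorial (j+1) : ℝ)
          * |u x| ^ (q * ((j:ℝ)+1))) := by
    intro x
    have ht0 : 0 ≤ σ * |u x| ^ q := by positivity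
    calc ENNReal.ofReal (Real.exp (σ * |u x| ^ q) - 1)
        = ENNReal.ofReal (∑' j : ℕ, (σ * |u x| ^ q) ^ (j+1) / (Nat.factorial (j+1) : ℝ)) := by
          rw [aux_exp_sub_one]
      _ = ∑' j : ℕ, ENNReal.ofReal ((σ * |u x| ^ q) ^ (j+1) / (Nat.factorial (j+1) : ℝ)) :=
          ENNReal.ofReal_tsum_of_nonneg (fun n => by positivity) (aux_summable_shift _)
      _ = _ := tsum_congr fun j => by rw [hterm x j]
  have hmeas : ∀ j : ℕ, AEMeasurable (fun x => ENNReal.ofReal (σ ^ (j+1)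
      / (Nat.factorial (j+1) : ℝ) * |u x| ^ (q * ((j:ℝ)+1)))) μ := by
    intro j
    apply Measurable.aemeasurable
    fun_prop
  have hj : ∀ j : ℕ, ∫⁻ x, ENNReal.ofReal (σ ^ (j+1) / (Nat.factorial (j+1) : ℝ)
      * |u x| ^ (q * ((j:ℝ)+1))) ∂μ ≤ ENNReal.ofReal (a j) * μ Set.univ := by
    intro j
    have hj1 : (1:ℝ) ≤ (j:ℝ) + 1 := by
      have : (0:ℝ) ≤ (j:ℝ) := Nat.cast_nonneg j
      linarith
    set p : ℝ := ((j:ℝ)+1) * q with hpdef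
    clear_value p
    have hfacpos : (0:ℝ) < (Nat.factorial (j + 1) : ℝ) := by positivity
    have hp1 : 1 < p := by
      calc (1:ℝ) < q := hq1
        _ = 1 * q := (one_mul q).symm
        _ ≤ ((j:ℝ)+1) * q := mul_le_mul_of_nonneg_right hj1 hq0.le
        _ = p := hpdef.symm
    have hp0 : (0:ℝ) < p := by linarith
    have hmom := aux_moment μ u (C₄ * p ^ (1 - 1/ν)) p (by positivity) hp0 (hbd p hp1)
    have hc0 : (0:ℝ) ≤ σ ^ (j+1) / (Nat.factorial (j+1) : ℝ) := by positivity
    calc ∫⁻ x, ENNReal.ofReal (σ ^ (j+1) / (Nat.factorial (j+1) : ℝ)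
            * |u x| ^ (q * ((j:ℝ)+1))) ∂μ
        = ENNReal.ofReal (σ ^ (j+1) / (Nat.factorial (j+1) : ℝ))
            * ∫⁻ x, (ENNReal.ofReal |u x|) ^ p ∂μ := by
          have hpe : ∀ x, ENNReal.ofReal (σ ^ (j+1) / (Nat.factorial (j+1) : ℝ)
              * |u x| ^ (q * ((j:ℝ)+1)))
              = ENNReal.ofReal (σ ^ (j+1) / (Nat.factorial (j+1) : ℝ))
                * (ENNReal.ofReal |u x|) ^ p := by
            intro x
            rw [ENNReal.ofReal_mul hc0,
              show q * ((j:ℝ)+1) = p from by rw [hpdef]; ring,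
              ENNReal.ofReal_rpow_of_nonneg (abs_nonneg _) hp0.le]
          rw [lintegral_congr hpe, lintegral_const_mul' _ _ ENNReal.ofReal_ne_top]
      _ ≤ ENNReal.ofReal (σ ^ (j+1) / (Nat.factorial (j+1) : ℝ))
            * (ENNReal.ofReal ((C₄ * p ^ (1 - 1/ν)) ^ p) * μ Set.univ) :=
          mul_le_mul_right hmom _
      _ = ENNReal.ofReal (a j) * μ Set.univ := by
          rw [← mul_assoc, ← ENNReal.ofReal_mul hc0]
          congr 2
          have hq1' : (1:ℝ) - 1/ν = 1/q := by
            rw [hqdef]; field_simp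
          have hCp : (C₄ * p ^ ((1:ℝ) - 1/ν)) ^ p = C₄ ^ p * p ^ ((j:ℝ)+1) := by
            rw [Real.mul_rpow hC₄.le (by positivity), ← Real.rpow_mul hp0.le, hq1', hpdef]
            congr 2
            field_simp
          have hpalt : ((j:ℝ)+1) * ν / (ν - 1) = p := by
            rw [hpdef, hqdef]; ring
          rw [hadef]; simp only []
          rw [hpalt, hCp]
          ring
  calc ∫⁻ x, ENNReal.ofReal (Real.exp (σ * |u x| ^ q) - 1) ∂μ
      = ∑' j : ℕ, ∫⁻ x, ENNReal.ofReal (σ ^ (j+1) / (Nat.factorial (j+1) : ℝ)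
          * |u x| ^ (q * ((j:ℝ)+1))) ∂μ := by
        rw [lintegral_congr hpt, lintegral_tsum hmeas]
    _ ≤ ∑' j : ℕ, ENNReal.ofReal (a j) * μ Set.univ := ENNReal.tsum_le_tsum hj
    _ = (∑' j : ℕ, ENNReal.ofReal (a j)) * μ Set.univ := ENNReal.tsum_mul_right
    _ = ENNReal.ofReal (∑' j : ℕ, a j) * μ Set.univ := by
        rw [ENNReal.ofReal_tsum_of_nonneg hanonneg hsummable]
    _ = μ Set.univ * ENNReal.ofReal (∑' j : ℕ, a j) := mul_comm _ _
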